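/- A simple digraph D on n vertices satisfies F(D) = n − 2 if and only if every vertex has positive in-degree and there exist vertices u, v with N⁻(u) \ {v} = N⁻(v) \ {u}. -/
import Mathlib


/-- The set of out-neighbors of `v` in the digraph with arc relation `A`. -/
def Nout {V : Type} (A : V → V → Prop) (v : V) : Set V := {w | A v w}

/-- The set of in-neighbors of `v`. -/
def Nin {V : Type} (A : V → V → Prop) (v : V) : Set V := {w | A w v}

/-- One application of the color change rule to the set `S` of filled vertices. -/
def Bstep {V : Type} (A : V → V → Prop) (S : Set V) : Set V :=
  S ∪ {w | ∃ v ∈ S, Nout A v \ S = {w}}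

/-- `S` is a zero forcing set: iterating the color change rule fills all vertices. -/
def IsZFS {V : Type} (A : V → V → Prop) (S : Set V) : Prop :=
  ∃ t, (Bstep A)^[t] S = Set.univ

/-- The failed zero forcing number: the maximum cardinality of a failed zero forcing set. -/
noncomputable def Fnum {V : Type} (A : V → V → Prop) : ℕ :=
  sSup {k | ∃ S : Set V, ¬ IsZFS A S ∧ S.ncard = k}

/-- The zero forcing number: the minimum cardinality of a zero forcing set. -/
noncomputable def Znum {V : Type} (A : V → V → Prop) : ℕ :=
  sInf {k | ∃ S : Set V, IsZFS A S ∧ S.ncard = k}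

/-- `W` is a critical set: `W` is nonempty and no vertex outside `W` has exactly one
out-neighbor in `W`. -/
def IsCritical {V : Type} (A : V → V → Prop) (W : Set V) : Prop :=
  W.Nonempty ∧ ∀ v ∈ Wᶜ, (Nout A v ∩ W).ncard ≠ 1

/-- `D` is a directed cycle: either a single vertex with no arcs, or the vertices can be
cyclically labeled so that the arcs are exactly the consecutive ones. -/
def IsDirectedCycle {V : Type} [Fintype V] (A : V → V → Prop) : Prop :=
  (Fintype.card V = 1 ∧ ∀ u v : V, ¬ A u v) ∨
  (2 ≤ Fintype.card V ∧ ∃ e : ZMod (Fintype.card V) ≃ V,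
      ∀ i j : ZMod (Fintype.card V), A (e i) (e j) ↔ j = i + 1)

lemma bstep_subset {V : Type} (A : V → V → Prop) (S : Set V) : S ⊆ Bstep A S :=
  Set.subset_union_left

lemma fill_last {V : Type} (A : V → V → Prop) (hA : Irreflexive A) (S : Set V) (w : V)
    (hS : Set.univ \ {w} ⊆ S) (hw : ∃ x, A x w) : Bstep A S = Set.univ := by
  apply Set.eq_univ_of_univ_subset
  intro y _
  by_cases hwS : w ∈ S
  · refine bstep_subset A S ?_
    by_cases hyw : y = w
    · exact hyw ▸ hwS
    · exact hS ⟨trivial, hyw⟩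
  · by_cases hyw : y = w
    · subst hyw
      obtain ⟨x, hx⟩ := hw
      have hxy : x ≠ y := fun h => hA y (h ▸ hx)
      refine Or.inr ⟨x, hS ⟨trivial, hxy⟩, ?_⟩
      ext z
      constructor
      · rintro ⟨hz1, hz2⟩
        by_contra hzy
        exact hz2 (hS ⟨trivial, hzy⟩)
      · rintro rfl
        exact ⟨hx, hwS⟩
    · exact Or.inl (hS ⟨trivial, hyw⟩)

lemma failed_ncard_le {V : Type} [Fintype V] (A : V → V → Prop) (hA : Irreflexive A)
    (hin : ∀ w : V, ∃ x : V, A x w) (S : Set V) (hS : ¬ IsZFS A S) :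
    S.ncard ≤ Fintype.card V - 2 := by
  by_contra h
  push_neg at h
  have hcard : S.ncard ≤ Fintype.card V := by
    simpa [Set.ncard_univ] using Set.ncard_le_ncard (Set.subset_univ S) Set.finite_univ
  have hcompl : S.ncard + Sᶜ.ncard = Fintype.card V := by
    rw [Set.ncard_add_ncard_compl, Nat.card_eq_fintype_card]
  have hle1 : Sᶜ.ncard ≤ 1 := by omega
  rcases Set.eq_empty_or_nonempty Sᶜ with he | ⟨w, hw⟩
  · exact hS ⟨0, by simpa using (Set.compl_empty_iff.mp he)⟩
  · have hsing : Sᶜ = {w} := by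
      apply Set.eq_singleton_iff_unique_mem.mpr
      refine ⟨hw, fun z hz => ?_⟩
      by_contra hzw
      have : 1 < Sᶜ.ncard :=
        (Set.one_lt_ncard_iff (Set.toFinite Sᶜ)).mpr ⟨z, w, hz, hw, hzw⟩
      omega
    have hsub : Set.univ \ {w} ⊆ S := by
      intro z hz
      by_contra hzS
      have : z ∈ Sᶜ := hzS
      rw [hsing] at this
      exact hz.2 this
    exact hS ⟨1, by simpa using fill_last A hA S w hsub (hin w)⟩

lemma forced_iff {V : Type} [Fintype V] (A : V → V → Prop) (hA : Irreflexive A)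
    (hin : ∀ w : V, ∃ x : V, A x w) (S : Set V) (hS : ¬ IsZFS A S)
    (u v : V) (huv : u ≠ v) (hc : Sᶜ = {u, v}) (x : V) (hxu : x ≠ u) (hxv : x ≠ v)
    (hAxu : A x u) : A x v := by
  by_contra hAxv
  have hxS : x ∈ S := by
    by_contra h
    have : x ∈ Sᶜ := h
    rw [hc] at this
    rcases this with h | h
    · exact hxu h
    · exact hxv h
  have huc : u ∈ Sᶜ := by rw [hc]; exact Or.inl rfl
  have hvc : v ∈ Sᶜ := by rw [hc]; exact Or.inr rfl
  have heq : Nout A x \ S = {u} := by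
    ext z
    constructor
    · rintro ⟨hz1, hz2⟩
      have : z ∈ Sᶜ := hz2
      rw [hc] at this
      rcases this with h | h
      · exact h
      · exact absurd (h ▸ hz1) hAxv
    · rintro rfl
      exact ⟨hAxu, huc⟩
  have hu : u ∈ Bstep A S := Or.inr ⟨x, hxS, heq⟩
  have hsub : Set.univ \ {v} ⊆ Bstep A S := by
    intro z hz
    by_cases hzS : z ∈ S
    · exact bstep_subset A S hzS
    · have : z ∈ Sᶜ := hzS
      rw [hc] at this
      rcases this with h | h
      · exact h ▸ hu
      · exact absurd h hz.2
  refine hS ⟨2, ?_⟩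
  rw [show (2 : ℕ) = 1 + 1 from rfl, Function.iterate_add_apply, Function.iterate_one]
  exact fill_last A hA _ v hsub (hin v)

lemma bstep_fixed_pair {V : Type} (A : V → V → Prop) (u v : V)
    (hpair : ∀ x : V, x ≠ u → x ≠ v → (A x u ↔ A x v)) (huv : u ≠ v) :
    Bstep A (({u, v} : Set V)ᶜ) = ({u, v} : Set V)ᶜ := by
  apply Set.Subset.antisymm _ (bstep_subset _ _)
  rintro y (hy | ⟨x, hxS, heq⟩)
  · exact hy
  · exfalso
    have hxu : x ≠ u := fun h => hxS (h ▸ Or.inl rfl)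
    have hxv : x ≠ v := fun h => hxS (h ▸ Or.inr rfl)
    have hy' : y ∈ Nout A x \ ({u, v} : Set V)ᶜ := heq ▸ rfl
    have hyuv : y ∈ ({u, v} : Set V) := not_not.mp hy'.2
    rcases hyuv with h | h
    · have hv : v ∈ Nout A x \ (({u, v} : Set V)ᶜ) :=
        ⟨(hpair x hxu hxv).mp (h ▸ hy'.1), not_not.mpr (Or.inr rfl)⟩
      rw [heq] at hv
      have hvy : v = y := hv
      exact huv (hvy.trans h).symm
    · have hu : u ∈ Nout A x \ (({u, v} : Set V)ᶜ) :=
        ⟨(hpair x hxu hxv).mpr (h ▸ hy'.1), not_not.mpr (Or.inl rfl)⟩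
      rw [heq] at hu
      have huy : u = y := hu
      exact huv (huy.trans h)

theorem stmt_5 {V : Type} [Fintype V] (A : V → V → Prop) (hA : Irreflexive A)
    (hcard : 2 ≤ Fintype.card V) :
    Fnum A = Fintype.card V - 2 ↔
      ((∀ w : V, ∃ u : V, A u w) ∧
        ∃ u v : V, u ≠ v ∧ Nin A u \ {v} = Nin A v \ {u}) := by
  have hVne : Nonempty V := Fintype.card_pos_iff.mp (by omega)
  set K : Set ℕ := {k | ∃ S : Set V, ¬ IsZFS A S ∧ S.ncard = k} with hK
  have hFK : Fnum A = sSup K := rfl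
  have hbdd : BddAbove K := by
    refine ⟨Fintype.card V, ?_⟩
    rintro k ⟨S, _, rfl⟩
    simpa [Set.ncard_univ] using Set.ncard_le_ncard (Set.subset_univ S) Set.finite_univ
  have hBempty : Bstep A (∅ : Set V) = ∅ := by
    ext y; simp [Bstep]
  have hempty_failed : ¬ IsZFS A (∅ : Set V) := by
    rintro ⟨t, ht⟩
    rw [Function.iterate_fixed hBempty t] at ht
    exact Set.empty_ne_univ ht
  have hne : K.Nonempty := ⟨0, ∅, hempty_failed, Set.ncard_empty V⟩
  constructor
  · intro hF
    rw [hFK] at hF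
    have hin : ∀ w : V, ∃ x : V, A x w := by
      intro w
      by_contra hno
      push_neg at hno
      have hfail : ¬ IsZFS A (({w} : Set V)ᶜ) := by
        rintro ⟨t, ht⟩
        have hfix : Bstep A (({w} : Set V)ᶜ) = ({w} : Set V)ᶜ := by
          apply Set.Subset.antisymm _ (bstep_subset _ _)
          rintro y (hy | ⟨x, hxS, heq⟩)
          · exact hy
          · exfalso
            have hy' : y ∈ Nout A x \ ({w} : Set V)ᶜ := heq ▸ rfl
            have hyw : y = w := not_not.mp hy'.2
            exact hno x (hyw ▸ hy'.1)
        rw [Function.iterate_fixed hfix t] at ht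
        have : w ∈ (({w} : Set V)ᶜ) := ht ▸ trivial
        exact this rfl
      have hc1 : (({w} : Set V)ᶜ).ncard = Fintype.card V - 1 := by
        have h2 := Set.ncard_add_ncard_compl ({w} : Set V)
        rw [Set.ncard_singleton, Nat.card_eq_fintype_card] at h2
        omega
      have hmem : Fintype.card V - 1 ∈ K := ⟨_, hfail, hc1⟩
      have := le_csSup hbdd hmem
      omega
    have hFmem : Fintype.card V - 2 ∈ K := hF ▸ Nat.sSup_mem hne hbdd
    obtain ⟨S, hSfail, hScard⟩ := hFmem
    have hcompl : S.ncard + Sᶜ.ncard = Fintype.card V := by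
      rw [Set.ncard_add_ncard_compl, Nat.card_eq_fintype_card]
    have hc2 : Sᶜ.ncard = 2 := by omega
    obtain ⟨u, v, huv, hc⟩ := Set.ncard_eq_two.mp hc2
    refine ⟨hin, u, v, huv, ?_⟩
    have hc' : Sᶜ = {v, u} := by rw [hc, Set.pair_comm]
    ext x
    constructor
    · rintro ⟨hAxu, hxv⟩
      have hxv' : x ≠ v := hxv
      have hxu : x ≠ u := fun h => hA u (h ▸ hAxu)
      exact ⟨forced_iff A hA hin S hSfail u v huv hc x hxu hxv' hAxu, hxu⟩
    · rintro ⟨hAxv, hxu⟩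
      have hxu' : x ≠ u := hxu
      have hxv : x ≠ v := fun h => hA v (h ▸ hAxv)
      exact ⟨forced_iff A hA hin S hSfail v u huv.symm hc' x hxv hxu' hAxv, hxv⟩
  · rintro ⟨hin, u, v, huv, hNin⟩
    have hpair : ∀ x : V, x ≠ u → x ≠ v → (A x u ↔ A x v) := by
      intro x hxu hxv
      constructor
      · intro h
        have hx : x ∈ Nin A u \ {v} := ⟨h, hxv⟩
        rw [hNin] at hx
        exact hx.1
      · intro h
        have hx : x ∈ Nin A v \ {u} := ⟨h, hxu⟩
        rw [← hNin] at hx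
        exact hx.1
    have hfix := bstep_fixed_pair A u v hpair huv
    have hfail : ¬ IsZFS A (({u, v} : Set V)ᶜ) := by
      rintro ⟨t, ht⟩
      rw [Function.iterate_fixed hfix t] at ht
      have : u ∈ (({u, v} : Set V)ᶜ) := ht ▸ trivial
      exact this (Or.inl rfl)
    have hcard2 : ((({u, v} : Set V)ᶜ)).ncard = Fintype.card V - 2 := by
      have h2 := Set.ncard_add_ncard_compl ({u, v} : Set V)
      rw [Set.ncard_pair huv, Nat.card_eq_fintype_card] at h2
      omega
    have hmem : Fintype.card V - 2 ∈ K := ⟨_, hfail, hcard2⟩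
    rw [hFK]
    apply le_antisymm
    · apply csSup_le hne
      rintro k ⟨S, hSf, rfl⟩
      exact failed_ncard_le A hA hin S hSf
    · exact le_csSup hbdd hmem
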